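/- For every k ∈ {1, 2, …, N−1}, the real number 2·cos(kπ/N)/z is an eigenvalue of the matrix T. -/

import Mathlib

open Real Matrix Finset

lemma sum_two_aux {N : ℕ} (a b : Fin N) (hab : a ≠ b) (g : Fin N → ℝ)
    (h : ∀ j, j ≠ a → j ≠ b → g j = 0) : ∑ j, g j = g a + g b := by
  rw [← Finset.sum_pair hab]
  refine (Finset.sum_subset (Finset.subset_univ _) ?_).symm
  intro j _ hj
  simp only [Finset.mem_insert, Finset.mem_singleton, not_or] at hj
  exact h j hj.1 hj.2

/-- The TSAC transition matrix `T` on the diagonal of the computation-qubit density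
matrix: `N = 2^n`, `z = e^ε + e^{-ε}`, `T 0 0 = T 0 1 = e^ε/z`,
`T (N-1) (N-2) = T (N-1) (N-1) = e^{-ε}/z`, and for `0 < i < N-1`,
`T i (i-1) = e^{-ε}/z`, `T i (i+1) = e^ε/z`; all other entries vanish. -/
noncomputable def Tmat (n : ℕ) (ε : ℝ) : Matrix (Fin (2 ^ n)) (Fin (2 ^ n)) ℝ :=
  fun i j =>
    if (i : ℕ) = 0 then
      if (j : ℕ) ≤ 1 then Real.exp ε / (Real.exp ε + Real.exp (-ε)) else 0
    else if (i : ℕ) = 2 ^ n - 1 then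
      if 2 ^ n - 2 ≤ (j : ℕ) then Real.exp (-ε) / (Real.exp ε + Real.exp (-ε)) else 0
    else if (j : ℕ) + 1 = (i : ℕ) then Real.exp (-ε) / (Real.exp ε + Real.exp (-ε))
    else if (j : ℕ) = (i : ℕ) + 1 then Real.exp ε / (Real.exp ε + Real.exp (-ε))
    else 0

/-- For every `k ∈ {1, …, N-1}` (with `N = 2^n`), the real number
`2 cos(kπ/N)/z` is an eigenvalue of the TSAC transition matrix `T`,
i.e. it admits a nonzero eigenvector. -/
theorem tsac_cosine_eigenvalues (n : ℕ) (hn : 1 ≤ n) (ε : ℝ) (hε : 0 < ε) :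
    ∀ k : ℕ, 1 ≤ k → k ≤ 2 ^ n - 1 →
      ∃ v : Fin (2 ^ n) → ℝ, v ≠ 0 ∧
        (Tmat n ε).mulVec v =
          (2 * Real.cos (k * Real.pi / 2 ^ n) / (Real.exp ε + Real.exp (-ε))) • v := by
  intro k hk1 hk2
  have hNpos : 0 < 2 ^ n := Nat.pow_pos (by norm_num)
  have hN2 : 2 ≤ 2 ^ n := by
    calc 2 = 2 ^ 1 := rfl
    _ ≤ 2 ^ n := Nat.pow_le_pow_right (by norm_num) hn
  set θ : ℝ := k * Real.pi / 2 ^ n with hθdef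
  set c : ℝ := Real.cos θ with hcdef
  set A : ℝ := Real.exp ε with hAdef
  set B : ℝ := Real.exp (-ε) with hBdef
  have hApos : 0 < A := Real.exp_pos _
  have hBpos : 0 < B := Real.exp_pos _
  have hzpos : 0 < A + B := by positivity
  have hz : A + B ≠ 0 := ne_of_gt hzpos
  have hAB : A * B = 1 := by rw [hAdef, hBdef, ← Real.exp_add]; simp
  set S : ℝ → ℝ := fun x => Real.sin (x * θ) with hSdef
  set E : ℝ → ℝ := fun x => Real.exp (-x * ε) with hEdef
  have hS : ∀ x : ℝ, S (x + 1) + S (x - 1) = 2 * c * S x := by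
    intro x
    simp only [hSdef, hcdef]
    rw [show (x+1)*θ = x*θ + θ by ring, show (x-1)*θ = x*θ - θ by ring,
      Real.sin_add, Real.sin_sub]
    ring
  have hE : ∀ x y : ℝ, E (x + y) = E x * E y := by
    intro x y
    simp only [hEdef]
    rw [← Real.exp_add]
    congr 1; ring
  have hE0 : E 0 = 1 := by simp [hEdef]
  have hE1 : E 1 = B := by simp [hEdef, hBdef]
  have hEm1 : E (-1) = A := by simp [hEdef, hAdef]
  have hS0 : S 0 = 0 := by simp [hSdef]
  have hθpos : 0 < θ := by
    rw [hθdef]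
    have : (0:ℝ) < k := by exact_mod_cast hk1
    positivity
  have hθlt : θ < Real.pi := by
    rw [hθdef, div_lt_iff₀ (by positivity)]
    have hk : (k:ℝ) < 2 ^ n := by
      have : k < 2 ^ n := by omega
      exact_mod_cast this
    nlinarith [Real.pi_pos]
  have hsθ : 0 < Real.sin θ := Real.sin_pos_of_pos_of_lt_pi hθpos hθlt
  have hSN : S ((2:ℝ) ^ n) = 0 := by
    simp only [hSdef]
    rw [show (2:ℝ)^n * θ = k * Real.pi by rw [hθdef]; field_simp]
    exact_mod_cast Real.sin_nat_mul_pi k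
  set v : Fin (2 ^ n) → ℝ :=
    fun i => E ((i:ℕ):ℝ) * (S (((i:ℕ):ℝ) + 1) - A * S ((i:ℕ):ℝ)) with hvdef
  refine ⟨v, ?_, ?_⟩
  · intro h0
    have h1 := congrFun h0 ⟨0, hNpos⟩
    simp only [hvdef, Pi.zero_apply, Fin.val_mk] at h1
    norm_num [hE0, hS0] at h1
    simp only [hSdef, one_mul] at h1
    exact absurd h1 (ne_of_gt hsθ)
  · funext i
    simp only [Matrix.mulVec, dotProduct, Pi.smul_apply, smul_eq_mul]
    by_cases hi0 : (i:ℕ) = 0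
    · -- first row
      have hi : i = ⟨0, hNpos⟩ := Fin.ext hi0
      rw [sum_two_aux (⟨0, hNpos⟩ : Fin (2^n)) ⟨1, by omega⟩
        (Fin.ne_of_val_ne (show 0 ≠ 1 by norm_num)) _ ?_]
      · simp only [hvdef, Tmat, hi, Fin.val_mk, ← hAdef, ← hBdef]
        norm_num [hE0, hE1, hS0]
        have h1 := hS 1
        rw [show (1:ℝ) + 1 = 2 by norm_num, show (1:ℝ) - 1 = 0 by norm_num, hS0] at h1
        linear_combination ((A*B)/(A+B)) * h1 + ((2*c*S 1 - A*S 1)/(A+B)) * hAB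
      · intro j hj0 hj1
        have hj0' : (j:ℕ) ≠ 0 := fun h => hj0 (Fin.ext h)
        have hj1' : (j:ℕ) ≠ 1 := by simpa [Fin.ext_iff] using hj1
        have : ¬ ((j:ℕ) ≤ 1) := by omega
        simp [Tmat, hi0, this]
    · by_cases hiN : (i:ℕ) = 2 ^ n - 1
      · -- last row
        rw [sum_two_aux (⟨2^n - 2, by omega⟩ : Fin (2^n)) ⟨2^n - 1, by omega⟩
          (Fin.ne_of_val_ne (show 2^n - 2 ≠ 2^n - 1 by omega)) _ ?_]
        · have hc1 : ((2^n - 1 : ℕ):ℝ) = (2:ℝ)^n - 1 := by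
            rw [Nat.cast_sub (by omega)]; push_cast; ring
          have hc2 : ((2^n - 2 : ℕ):ℝ) = (2:ℝ)^n - 2 := by
            rw [Nat.cast_sub (by omega)]; push_cast; ring
          have hne0 : ¬ (2^n - 1 = 0) := by omega
          have hle1 : 2^n - 2 ≤ 2^n - 2 := le_refl _
          have hle2 : 2^n - 2 ≤ 2^n - 1 := by omega
          simp only [hvdef, Tmat, Fin.val_mk, hiN, hne0, hle1, hle2, if_true, if_false,
            ite_true, ite_false, eq_self_iff_true, hc1, hc2, ← hAdef, ← hBdef]
          rw [show (2:ℝ)^n - 2 + 1 = (2:ℝ)^n - 1 by ring,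
            show (2:ℝ)^n - 1 + 1 = (2:ℝ)^n by ring, hSN]
          set r : ℝ := (2:ℝ)^n - 1 with hrdef
          have hEm : E (r - 1) = E r * A := by
            rw [show r - 1 = r + (-1) by ring, hE, hEm1]
          rw [show (2:ℝ)^n - 2 = r - 1 by rw [hrdef]; ring, hEm]
          have h1 := hS r
          rw [show r + 1 = (2:ℝ)^n by rw [hrdef]; ring, hSN] at h1
          linear_combination ((-(A*A*B*E r))/(A+B)) * h1 + ((-(2*c*A*E r*S r))/(A+B)) * hAB
        · intro j hja hjb
          have hja' : (j:ℕ) ≠ 2^n - 2 := by simpa [Fin.ext_iff] using hja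
          have hjb' : (j:ℕ) ≠ 2^n - 1 := by simpa [Fin.ext_iff] using hjb
          have hlt := j.isLt
          have : ¬ (2^n - 2 ≤ (j:ℕ)) := by omega
          have hne0 : ¬ (2^n - 1 = 0) := by omega
          simp [Tmat, hi0, hiN, hne0, this]
      · -- interior row
        have hi1 : 1 ≤ (i:ℕ) := by omega
        have hilt : (i:ℕ) + 1 < 2 ^ n := by have := i.isLt; omega
        rw [sum_two_aux (⟨(i:ℕ) - 1, by omega⟩ : Fin (2^n)) ⟨(i:ℕ) + 1, hilt⟩
          (Fin.ne_of_val_ne (show (i:ℕ) - 1 ≠ (i:ℕ) + 1 by omega)) _ ?_]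
        · set r : ℝ := ((i:ℕ):ℝ) with hrdef
          have hcsub : (((i:ℕ) - 1 : ℕ):ℝ) = r - 1 := by
            rw [Nat.cast_sub hi1, hrdef]; push_cast; ring
          have hcadd : (((i:ℕ) + 1 : ℕ):ℝ) = r + 1 := by rw [hrdef]; push_cast; ring
          have hcond1 : (i:ℕ) - 1 + 1 = (i:ℕ) := by omega
          have hcond2 : ¬ ((i:ℕ) + 1 + 1 = (i:ℕ)) := by omega
          simp only [hvdef, Tmat, Fin.val_mk, hi0, hiN, if_false, hcond1, hcond2, if_true,
            hcsub, hcadd, ← hAdef, ← hBdef]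
          norm_num
          rw [← hrdef, show r + 1 + 1 = r + 2 by ring]
          have hEm : E (r - 1) = E r * A := by
            rw [show r - 1 = r + (-1) by ring, hE, hEm1]
          have hEp : E (r + 1) = E r * B := by rw [hE, hE1]
          rw [hEm, hEp]
          have h1 := hS r
          have h2 := hS (r + 1)
          rw [show r + 1 + 1 = r + 2 by ring, show r + 1 - 1 = r by ring] at h2
          linear_combination ((-(A*A*B*E r))/(A+B)) * h1 + ((A*B*E r)/(A+B)) * h2 +
            ((2*c*E r*S (r+1) - 2*c*A*E r*S r)/(A+B)) * hAB
        · intro j hja hjb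
          have hja' : (j:ℕ) ≠ (i:ℕ) - 1 := by simpa [Fin.ext_iff] using hja
          have hjb' : (j:ℕ) ≠ (i:ℕ) + 1 := by simpa [Fin.ext_iff] using hjb
          have h1 : ¬ ((j:ℕ) + 1 = (i:ℕ)) := by omega
          have h2 : ¬ ((j:ℕ) = (i:ℕ) + 1) := by omega
          simp [Tmat, hi0, hiN, h1, h2]
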